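/- Let (Q̃, λ̃) be a ν-approximate equilibrium of the zero-sum game with payoff L(Q, λ) = êrr(Q) + λᵀ r̂(Q), Λ = {λ ∈ ℝ₊^k : ‖λ‖₁ ≤ B}, êrr taking values in [0,1], and suppose some Q* ∈ Δ(ℋ) satisfies r̂(Q*) ≤ 0 coordinate-wise. Then every coordinate of r̂(Q̃) is at most (1 + 2ν)/B; in particular every group false/true positive rate disparity of Q̃ is at most γ + (1 + 2ν)/B. -/

import Mathlib

open Finset

/-- empirical fairness violation bound of Agarwal et al.: if
`(Q̃, λ̃)` is a `ν`-approximate equilibrium of the Lagrangian game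
`L(Q, λ) = êrr(Q) + λᵀr̂(Q)` with `Λ = {λ ≥ 0 : ‖λ‖₁ ≤ B}`, `êrr ∈ [0,1]`,
and the fairness constraints are feasible, then every coordinate of `r̂(Q̃)`
is at most `(1 + 2ν)/B`. -/
theorem approx_equilibrium_fairness_bound {V : Type*} {k : ℕ}
    (err : V → ℝ) (r : V → Fin k → ℝ) (B ν : ℝ) (hB : 0 < B)
    (herr : ∀ Q : V, err Q ∈ Set.Icc (0:ℝ) 1)
    (Qtil : V) (ltil : Fin k → ℝ)
    (hltil : (∀ j, 0 ≤ ltil j) ∧ ∑ j, |ltil j| ≤ B)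
    (heq1 : ∀ Q : V, err Qtil + ∑ j, ltil j * r Qtil j
        ≤ err Q + ∑ j, ltil j * r Q j + ν)
    (heq2 : ∀ lam : Fin k → ℝ, (∀ j, 0 ≤ lam j) → (∑ j, |lam j| ≤ B) →
      err Qtil + ∑ j, ltil j * r Qtil j
        ≥ err Qtil + ∑ j, lam j * r Qtil j - ν)
    (Qstar : V) (hfeas : ∀ j, r Qstar j ≤ 0) :
    ∀ j, r Qtil j ≤ (1 + 2 * ν) / B := by
  intro j
  -- dual strategy: mass B on coordinate j
  have h2 := heq2 (fun i => if i = j then B else 0)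
    (fun i => by split <;> [exact hB.le; exact le_refl 0])
    (by
      have : ∑ i, |if i = j then B else 0| = B := by
        rw [Finset.sum_eq_single j]
        · simp [abs_of_pos hB]
        · intro b _ hb; simp [hb]
        · simp
      rw [this])
  have hsum : ∑ i, (if i = j then B else 0) * r Qtil i = B * r Qtil j := by
    rw [Finset.sum_eq_single j]
    · simp
    · intro b _ hb; simp [hb]
    · simp
  rw [hsum] at h2
  have hBr : B * r Qtil j ≤ (∑ i, ltil i * r Qtil i) + ν := by linarith
  -- primal: compare with Qstar
  have h1 := heq1 Qstar
  have hstar : ∑ i, ltil i * r Qstar i ≤ 0 :=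
    Finset.sum_nonpos fun i _ => mul_nonpos_of_nonneg_of_nonpos (hltil.1 i) (hfeas i)
  have herrQt := herr Qtil
  have herrQs := herr Qstar
  simp only [Set.mem_Icc] at herrQt herrQs
  have : B * r Qtil j ≤ 1 + 2 * ν := by linarith
  exact (le_div_iff₀ hB).mpr (by linarith [mul_comm B (r Qtil j)])
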